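/- arXiv:1207.4319 — 3 statements merged into one kernel-verified Lean document; each statement's English description precedes it below -/
import Mathlib

section
/- Let ε, γ ∈ ℝ with |ε| < 1, and let x : ℝ → ℝ be twice differentiable and satisfy ẍ(t) + (1 + ε cos t)·x(t)³ + γ·ẋ(t) = 0 for all t ∈ ℝ. Assume that 2γ(1 + ε cos t) ≥ ε sin t for all t ∈ ℝ. Then every solution is bounded in the future: for all t ≥ 0, x(t)⁴ ≤ 4·V(0) and ẋ(t)² ≤ 2(1 + |ε|)·V(0), where V(0) = ẋ(0)²/(2(1 + ε)) + x(0)⁴/4. -/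
/-- For the periodically driven cubic oscillator with friction, under the damping
condition `2γ(1 + ε cos t) ≥ ε sin t`, every solution is bounded in the future:
for all `t ≥ 0`, `x(t)⁴ ≤ 4 V(0)` and `ẋ(t)² ≤ 2(1 + |ε|) V(0)`, where
`V(0) = ẋ(0)²/(2(1 + ε)) + x(0)⁴/4`. -/
theorem cubic_oscillator_bounded_future
    (ε γ : ℝ) (hε : |ε| < 1) (x : ℝ → ℝ)
    (hx : Differentiable ℝ x) (hx' : Differentiable ℝ (deriv x))
    (hode : ∀ t : ℝ,
      deriv (deriv x) t + (1 + ε * Real.cos t) * (x t) ^ 3 + γ * deriv x t = 0)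
    (hdamp : ∀ t : ℝ, 2 * γ * (1 + ε * Real.cos t) ≥ ε * Real.sin t)
    (V0 : ℝ) (hV0 : V0 = (deriv x 0) ^ 2 / (2 * (1 + ε)) + (x 0) ^ 4 / 4) :
    ∀ t : ℝ, 0 ≤ t →
      (x t) ^ 4 ≤ 4 * V0 ∧ (deriv x t) ^ 2 ≤ 2 * (1 + |ε|) * V0 := by
  set V : ℝ → ℝ := fun t =>
    (deriv x t) ^ 2 / (2 * (1 + ε * Real.cos t)) + (x t) ^ 4 / 4 with hV
  have ha : ∀ t : ℝ, 0 < 1 + ε * Real.cos t := by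
    intro t
    have h1 : |ε * Real.cos t| ≤ |ε| := by
      rw [abs_mul]
      nlinarith [Real.abs_cos_le_one t, abs_nonneg ε]
    have h2 := neg_abs_le (ε * Real.cos t)
    linarith
  have hderiv : ∀ t : ℝ, HasDerivAt V
      ((deriv x t) ^ 2 * (ε * Real.sin t - 2 * γ * (1 + ε * Real.cos t)) /
        (2 * (1 + ε * Real.cos t) ^ 2)) t := by
    intro t
    have hat : (2 * (1 + ε * Real.cos t)) ≠ 0 := ne_of_gt (by have := ha t; linarith)
    have h1 : HasDerivAt (fun s => (deriv x s) ^ 2)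
        (2 * (deriv x t) ^ 1 * deriv (deriv x) t) t :=
      ((hx' t).hasDerivAt).pow 2
    have h2 : HasDerivAt (fun s => 2 * (1 + ε * Real.cos s))
        (2 * (ε * (-Real.sin t))) t :=
      (((Real.hasDerivAt_cos t).const_mul ε).const_add 1).const_mul 2
    have h3 : HasDerivAt (fun s => (x s) ^ 4) (4 * (x t) ^ 3 * deriv x t) t :=
      ((hx t).hasDerivAt).pow 4
    have h4 := (h1.div h2 hat).add (h3.div_const 4)
    refine h4.congr_deriv ?_
    have hO := hode t
    have hu' : deriv (deriv x) t = -(1 + ε * Real.cos t) * (x t) ^ 3 - γ * deriv x t := by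
      linarith
    rw [hu']
    have hne : (1 + ε * Real.cos t) ≠ 0 := ne_of_gt (ha t)
    field_simp
    ring
  have hdiff : Differentiable ℝ V := fun t => (hderiv t).differentiableAt
  have hnonpos : ∀ t : ℝ, deriv V t ≤ 0 := by
    intro t
    rw [(hderiv t).deriv]
    have hd := hdamp t
    have h1 : (deriv x t) ^ 2 * (ε * Real.sin t - 2 * γ * (1 + ε * Real.cos t)) ≤ 0 := by
      have := sq_nonneg (deriv x t)
      nlinarith
    have h2 : (0:ℝ) < 2 * (1 + ε * Real.cos t) ^ 2 := by nlinarith [ha t]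
    exact div_nonpos_of_nonpos_of_nonneg h1 h2.le
  have hanti : Antitone V := antitone_of_deriv_nonpos hdiff hnonpos
  have hV00 : V 0 = V0 := by
    simp only [hV, Real.cos_zero, mul_one]
    rw [hV0]
  intro t ht
  have hVt : V t ≤ V0 := hV00 ▸ hanti ht
  have hterm1 : 0 ≤ (deriv x t) ^ 2 / (2 * (1 + ε * Real.cos t)) := by
    have := ha t; positivity
  have hterm2 : 0 ≤ (x t) ^ 4 / 4 := by positivity
  have hVt' : (deriv x t) ^ 2 / (2 * (1 + ε * Real.cos t)) + (x t) ^ 4 / 4 ≤ V0 := hVt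
  have hV0nn : 0 ≤ V0 := le_trans (by linarith) hVt'
  constructor
  · linarith
  · have h1 : (deriv x t) ^ 2 ≤ 2 * (1 + ε * Real.cos t) * V0 := by
      have h2 : (deriv x t) ^ 2 / (2 * (1 + ε * Real.cos t)) ≤ V0 := by linarith
      have h3 : (0:ℝ) < 2 * (1 + ε * Real.cos t) := by have := ha t; linarith
      calc (deriv x t) ^ 2
          = (deriv x t) ^ 2 / (2 * (1 + ε * Real.cos t)) * (2 * (1 + ε * Real.cos t)) := by
            rw [div_mul_cancel₀ _ h3.ne']
        _ ≤ V0 * (2 * (1 + ε * Real.cos t)) := by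
            exact mul_le_mul_of_nonneg_right h2 h3.le
        _ = 2 * (1 + ε * Real.cos t) * V0 := by ring
    have hle : 1 + ε * Real.cos t ≤ 1 + |ε| := by
      have h1 : ε * Real.cos t ≤ |ε * Real.cos t| := le_abs_self _
      have h2 : |ε * Real.cos t| ≤ |ε| := by
        rw [abs_mul]
        nlinarith [Real.abs_cos_le_one t, abs_nonneg ε]
      linarith
    nlinarith
end

section
/- Let ε, γ ∈ ℝ with |ε| < 1 and γ > |ε|/(2·√(1 − ε²)). Then the origin is a global attractor for the periodically driven cubic oscillator with friction: every twice differentiable x : ℝ → ℝ satisfying ẍ(t) + (1 + ε cos t)·x(t)³ + γ·ẋ(t) = 0 for all t ∈ ℝ satisfies x(t) → 0 and ẋ(t) → 0 as t → +∞. -/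
set_option maxHeartbeats 1000000


open Filter

/-- If `|ε| < 1` and `γ > |ε|/(2√(1 − ε²))`, the origin is a global attractor for
the driven cubic oscillator `ẍ + (1 + ε cos t) x³ + γ ẋ = 0`: every solution
satisfies `x(t) → 0` and `ẋ(t) → 0` as `t → +∞`. -/
theorem cubic_oscillator_global_attraction
    (ε γ : ℝ) (hε : |ε| < 1)
    (hγ : γ > |ε| / (2 * Real.sqrt (1 - ε ^ 2)))
    (x : ℝ → ℝ)
    (hx : Differentiable ℝ x) (hx' : Differentiable ℝ (deriv x))
    (hode : ∀ t : ℝ,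
      deriv (deriv x) t + (1 + ε * Real.cos t) * (x t) ^ 3 + γ * deriv x t = 0) :
    Tendsto x atTop (nhds 0) ∧ Tendsto (deriv x) atTop (nhds 0) := by
  set e := |ε| with he_def
  have he0 : 0 ≤ e := abs_nonneg ε
  have he1 : e < 1 := hε
  have heps : 1 - ε ^ 2 > 0 := by
    have : ε ^ 2 = e ^ 2 := (sq_abs ε).symm
    nlinarith
  set s := Real.sqrt (1 - ε ^ 2) with hs_def
  have hs0 : 0 < s := Real.sqrt_pos.2 heps
  have hs2 : s ^ 2 = 1 - ε ^ 2 := Real.sq_sqrt heps.le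
  have hγ0 : 0 < γ := lt_of_le_of_lt (div_nonneg he0 (by positivity)) hγ
  set δ := γ - e / (2 * s) with hδ_def
  have hδ : 0 < δ := by simp only [hδ_def]; linarith [hγ]
  set v := deriv x with hv_def
  set a : ℝ → ℝ := fun t => 1 + ε * Real.cos t with ha_def
  have hab : ∀ t, 1 - e ≤ a t ∧ a t ≤ 1 + e := by
    intro t
    have h1 : |ε * Real.cos t| ≤ e := by
      rw [abs_mul]
      exact mul_le_of_le_one_right he0 (Real.abs_cos_le_one t)
    have h2 := abs_le.1 h1
    constructor <;> simp only [ha_def] <;> linarith [h2.1, h2.2]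
  have ha_pos : ∀ t, 0 < a t := fun t => lt_of_lt_of_le (by linarith) (hab t).1
  -- key pointwise inequality
  have hkey : ∀ t, δ ≤ γ - ε * Real.sin t / (2 * a t) := by
    intro t
    have hA := ha_pos t
    have h1 : s * |Real.sin t| ≤ a t := by
      have hp := Real.sin_sq_add_cos_sq t
      have h2 : (s * |Real.sin t|) ^ 2 ≤ (a t) ^ 2 := by
        have : (s * |Real.sin t|) ^ 2 = (1 - ε ^ 2) * Real.sin t ^ 2 := by
          rw [mul_pow, hs2, sq_abs]
        rw [this]
        simp only [ha_def]
        nlinarith [sq_nonneg (Real.cos t + ε)]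
      nlinarith [mul_nonneg hs0.le (abs_nonneg (Real.sin t))]
    have h2 : ε * Real.sin t * s ≤ e * a t := by
      calc ε * Real.sin t * s ≤ |ε * Real.sin t| * s := by
            nlinarith [le_abs_self (ε * Real.sin t)]
        _ = e * (s * |Real.sin t|) := by rw [abs_mul]; ring
        _ ≤ e * a t := mul_le_mul_of_nonneg_left h1 he0
    have h3 : ε * Real.sin t / (2 * a t) ≤ e / (2 * s) := by
      rw [div_le_div_iff₀ (by linarith) (by linarith)]
      nlinarith
    simp only [hδ_def]
    linarith
  -- the Lyapunov function
  set W : ℝ → ℝ := fun t => v t ^ 2 / (2 * a t) + x t ^ 4 / 4 with hW_def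
  have hdx : ∀ t, HasDerivAt x (v t) t := fun t => (hx t).hasDerivAt
  have hdv : ∀ t, HasDerivAt v (-(a t * x t ^ 3) - γ * v t) t := by
    intro t
    have h := (hx' t).hasDerivAt
    have h2 : deriv (deriv x) t = -(a t * x t ^ 3) - γ * v t := by
      have := hode t
      simp only [ha_def, hv_def]
      linarith
    rwa [h2] at h
  have hda : ∀ t, HasDerivAt a (-(ε * Real.sin t)) t := by
    intro t
    have := ((Real.hasDerivAt_cos t).const_mul ε).const_add 1
    exact this.congr_deriv (by ring)
  have hdW : ∀ t, HasDerivAt W (-(v t ^ 2 / a t) * (γ - ε * Real.sin t / (2 * a t))) t := by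
    intro t
    have hA := ha_pos t
    have h1 : HasDerivAt (fun t => v t ^ 2) (2 * v t * (-(a t * x t ^ 3) - γ * v t)) t := by
      have h := (hdv t).pow 2
      simp at h
      exact h
    have h2 : HasDerivAt (fun t => 2 * a t) (2 * -(ε * Real.sin t)) t := (hda t).const_mul 2
    have h3 := h1.div h2 (by positivity)
    have h4' : HasDerivAt (fun t => x t ^ 4) (4 * x t ^ 3 * v t) t := by
      have h := (hdx t).pow 4
      simp at h
      exact h
    have h4 := h4'.div_const 4
    have h5 := h3.add h4
    refine h5.congr_deriv ?_
    field_simp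
    ring
  -- derivative bound for W
  have hdWle : ∀ t, deriv W t ≤ -(δ / (1 + e)) * v t ^ 2 := by
    intro t
    rw [(hdW t).deriv]
    have hA := ha_pos t
    have hAe := (hab t).2
    have p1 : v t ^ 2 / (1 + e) ≤ v t ^ 2 / a t :=
      div_le_div_of_nonneg_left (sq_nonneg _) hA hAe
    have p2 := hkey t
    have p3 : (0:ℝ) ≤ v t ^ 2 / (1 + e) := by positivity
    have q := mul_le_mul p2 p1 p3 (le_trans hδ.le p2)
    have h1 : -(v t ^ 2 / a t) * (γ - ε * Real.sin t / (2 * a t))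
        = -((γ - ε * Real.sin t / (2 * a t)) * (v t ^ 2 / a t)) := by ring
    have h2 : -(δ / (1 + e)) * v t ^ 2 = -(δ * (v t ^ 2 / (1 + e))) := by ring
    rw [h1, h2]
    linarith
  have hWdiff : Differentiable ℝ W := fun t => (hdW t).differentiableAt
  have hW0 : ∀ t, 0 ≤ W t := by
    intro t
    have hA := ha_pos t
    have : (0:ℝ) ≤ v t ^ 2 / (2 * a t) := by positivity
    have : (0:ℝ) ≤ x t ^ 4 / 4 := by positivity
    simp only [hW_def]; linarith
  have hanti : Antitone W := by
    apply antitone_of_deriv_nonpos hWdiff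
    intro t
    have h1 := hdWle t
    nlinarith [sq_nonneg (v t), div_pos hδ (by linarith : (0:ℝ) < 1 + e)]
  have hbdd : BddBelow (Set.range W) := ⟨0, by rintro y ⟨t, rfl⟩; exact hW0 t⟩
  set L := ⨅ t, W t with hL_def
  have hlim : Tendsto W atTop (nhds L) := tendsto_atTop_ciInf hanti hbdd
  have hL0 : 0 ≤ L := le_ciInf hW0
  have hLle : ∀ t, L ≤ W t := fun t => ciInf_le hbdd t
  -- pointwise bounds used repeatedly
  have hx4W : ∀ t, x t ^ 4 ≤ 4 * W t := by
    intro t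
    have hA := ha_pos t
    have : (0:ℝ) ≤ v t ^ 2 / (2 * a t) := by positivity
    simp only [hW_def]; linarith
  have hv2W : ∀ t, v t ^ 2 ≤ 2 * (1 + e) * W t := by
    intro t
    have hA := ha_pos t
    have hAe := (hab t).2
    have h1 : v t ^ 2 / (2 * a t) ≤ W t := by
      have : (0:ℝ) ≤ x t ^ 4 / 4 := by positivity
      simp only [hW_def]; linarith
    have h2 : v t ^ 2 ≤ 2 * a t * W t := by
      rw [div_le_iff₀ (by positivity)] at h1; linarith [h1]
    nlinarith [hW0 t]
  -- main claim : L = 0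
  have hLzero : L = 0 := by
    by_contra hne
    have hLpos : 0 < L := lt_of_le_of_ne hL0 (Ne.symm hne)
    have h1e : (0:ℝ) < 1 + e := by linarith
    have h1me : (0:ℝ) < 1 - e := by linarith
    set X := Real.sqrt (4 * W 0) + 1 with hX_def
    have hX0 : 0 < X := by
      simp only [hX_def]
      positivity
    have hxb : ∀ t, 0 ≤ t → x t ^ 2 ≤ X := by
      intro t ht
      have h1 : x t ^ 4 ≤ 4 * W 0 := le_trans (hx4W t) (by linarith [hanti ht])
      have h2 : x t ^ 2 ≤ Real.sqrt (4 * W 0) := by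
        have h3 := Real.sqrt_le_sqrt h1
        rwa [show x t ^ 4 = (x t ^ 2) ^ 2 by ring, Real.sqrt_sq (sq_nonneg _)] at h3
      simp only [hX_def]
      linarith
    set K := 3 * X + γ ^ 2 / (2 * (1 - e)) with hK_def
    have hK0 : 0 < K := by
      have h1 : 0 ≤ γ ^ 2 / (2 * (1 - e)) := div_nonneg (sq_nonneg γ) (by linarith)
      simp only [hK_def]
      linarith
    set η := min (δ / (2 * (1 + e) * K)) (1 / (2 * (2 * X + 1 + e))) with hη_def
    have hη0 : 0 < η :=
      lt_min (div_pos hδ (mul_pos (by linarith) hK0)) (by positivity)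
    have hη1 : η * K ≤ δ / (2 * (1 + e)) := by
      have h := min_le_left (δ / (2 * (1 + e) * K)) (1 / (2 * (2 * X + 1 + e)))
      have h2 : δ / (2 * (1 + e) * K) * K = δ / (2 * (1 + e)) := by
        field_simp
      linarith [mul_le_mul_of_nonneg_right h hK0.le]
    have hη2 : η * (2 * X + 1 + e) ≤ 1 / 2 := by
      have h := min_le_right (δ / (2 * (1 + e) * K)) (1 / (2 * (2 * X + 1 + e)))
      have hp : (0:ℝ) < 2 * X + 1 + e := by linarith
      have h2 : 1 / (2 * (2 * X + 1 + e)) * (2 * X + 1 + e) = 1 / 2 := by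
        rw [div_mul_eq_mul_div, one_mul, div_eq_div_iff (by linarith) (by norm_num)]
        ring
      linarith [mul_le_mul_of_nonneg_right h hp.le]
    set G : ℝ → ℝ := fun t => W t + η * (x t ^ 3 * v t) with hG_def
    set G' : ℝ → ℝ := fun t => deriv W t
        + η * ((3 * x t ^ 2 * v t) * v t + x t ^ 3 * (-(a t * x t ^ 3) - γ * v t)) with hG'_def
    have hdG : ∀ t, HasDerivAt G (G' t) t := by
      intro t
      have h1 : HasDerivAt (fun t => x t ^ 3) (3 * x t ^ 2 * v t) t := by
        have h := (hdx t).pow 3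
        simp at h
        exact h
      have h2 := (h1.mul (hdv t)).const_mul η
      have h3 := (hWdiff t).hasDerivAt.add h2
      refine h3.congr_deriv ?_
      all_goals simp only [hG'_def]
      all_goals ring
    have hmain : ∀ t, 0 ≤ t →
        G' t ≤ -(δ / (2 * (1 + e))) * v t ^ 2 - η * (1 - e) / 2 * x t ^ 6 := by
      intro t ht
      have hA1 := (hab t).1
      have hxb' := hxb t ht
      have hdw := hdWle t
      have hy : -(γ * (x t ^ 3 * v t)) ≤ (1 - e) / 2 * x t ^ 6 + γ ^ 2 / (2 * (1 - e)) * v t ^ 2 := by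
        rw [← sub_nonneg]
        have hexp : (1 - e) / 2 * x t ^ 6 + γ ^ 2 / (2 * (1 - e)) * v t ^ 2 - -(γ * (x t ^ 3 * v t))
            = ((1 - e) * x t ^ 3 + γ * v t) ^ 2 / (2 * (1 - e)) := by
          field_simp
          ring
        rw [hexp]
        positivity
      have q1 : η * ((3 * x t ^ 2 * v t) * v t) ≤ 3 * η * X * v t ^ 2 := by
        have h := mul_le_mul_of_nonneg_right hxb' (sq_nonneg (v t))
        clear_value e s δ v a W L X K η G G'
        nlinarith [hη0.le]
      have q2 : η * (x t ^ 3 * (-(a t * x t ^ 3) - γ * v t))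
          ≤ -(η * (1 - e)) * x t ^ 6
            + η * ((1 - e) / 2 * x t ^ 6 + γ ^ 2 / (2 * (1 - e)) * v t ^ 2) := by
        have e2 : (1 - e) * x t ^ 6 ≤ a t * x t ^ 6 :=
          mul_le_mul_of_nonneg_right hA1 (by positivity)
        clear_value e s δ v a W L X K η G G'
        nlinarith [mul_le_mul_of_nonneg_left hy hη0.le, mul_le_mul_of_nonneg_left e2 hη0.le]
      have q3 : 3 * η * X * v t ^ 2 + η * (γ ^ 2 / (2 * (1 - e)) * v t ^ 2)
          ≤ δ / (2 * (1 + e)) * v t ^ 2 := by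
        have h2 : 3 * η * X * v t ^ 2 + η * (γ ^ 2 / (2 * (1 - e)) * v t ^ 2)
            = (η * K) * v t ^ 2 := by
          simp only [hK_def]
          ring
        rw [h2]
        exact mul_le_mul_of_nonneg_right hη1 (sq_nonneg _)
      have hid : δ / (1 + e) = 2 * (δ / (2 * (1 + e))) := by
        field_simp
      simp only [hG'_def]
      clear_value e s δ v a W L X K η G G'
      nlinarith [hdw, q1, q2, q3, hid]
    have hGlow : ∀ t, 0 ≤ t → W t / 2 ≤ G t := by
      intro t ht
      have hxb' := hxb t ht
      have s1 : x t ^ 6 ≤ X * x t ^ 4 := by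
        have h := mul_le_mul_of_nonneg_right hxb' (by positivity : (0:ℝ) ≤ x t ^ 4)
        nlinarith
      have s2 : X * x t ^ 4 ≤ X * (4 * W t) := mul_le_mul_of_nonneg_left (hx4W t) hX0.le
      have hv2 := hv2W t
      have hW0t := hW0 t
      clear_value e s δ v a W L X K η G G'
      have r1 : -(η * (x t ^ 3 * v t)) ≤ η * ((x t ^ 6 + v t ^ 2) / 2) := by
        nlinarith [mul_nonneg hη0.le (sq_nonneg (x t ^ 3 + v t))]
      have r2 : η * ((x t ^ 6 + v t ^ 2) / 2) ≤ η * ((4 * X * W t + 2 * (1 + e) * W t) / 2) :=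
        mul_le_mul_of_nonneg_left (by linarith) hη0.le
      have r3 : η * ((4 * X * W t + 2 * (1 + e) * W t) / 2) = η * (2 * X + 1 + e) * W t := by
        ring
      have r4 : η * (2 * X + 1 + e) * W t ≤ 1 / 2 * W t :=
        mul_le_mul_of_nonneg_right hη2 hW0t
      simp only [hG_def]
      linarith
    set m := min ((1 - e) * L) (2 * L * Real.sqrt (2 * L)) with hm_def
    have hm0 : 0 < m :=
      lt_min (mul_pos h1me hLpos)
        (mul_pos (mul_pos two_pos hLpos) (Real.sqrt_pos.2 (by linarith)))
    set c := min (δ / (2 * (1 + e))) (η * (1 - e) / 2) with hc_def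
    have hc0 : 0 < c :=
      lt_min (div_pos hδ (by linarith)) (div_pos (mul_pos hη0 h1me) two_pos)
    have hGm : ∀ t, 0 ≤ t → G' t ≤ -(c * m) := by
      intro t ht
      have h0 := hmain t ht
      have hA1 := (hab t).1
      have hWt : L ≤ v t ^ 2 / (2 * (1 - e)) + x t ^ 4 / 4 := by
        refine le_trans (hLle t) ?_
        have h1 : v t ^ 2 / (2 * a t) ≤ v t ^ 2 / (2 * (1 - e)) :=
          div_le_div_of_nonneg_left (sq_nonneg _) (by linarith) (by linarith)
        simp only [hW_def]
        linarith
      have hnn1 : 0 ≤ δ / (2 * (1 + e)) * v t ^ 2 :=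
        mul_nonneg (le_of_lt (div_pos hδ (by linarith))) (sq_nonneg _)
      have hnn2 : 0 ≤ η * (1 - e) / 2 * x t ^ 6 := by
        have h6 : (0:ℝ) ≤ x t ^ 6 := by positivity
        have h7 : 0 ≤ η * (1 - e) / 2 := le_of_lt (div_pos (mul_pos hη0 h1me) two_pos)
        exact mul_nonneg h7 h6
      by_cases hcase : (1 - e) * L ≤ v t ^ 2
      · have h1 : m ≤ v t ^ 2 := le_trans (min_le_left _ _) hcase
        have h3 : c * m ≤ δ / (2 * (1 + e)) * v t ^ 2 :=
          mul_le_mul (min_le_left _ _) h1 hm0.le (le_of_lt (div_pos hδ (by linarith)))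
        clear_value e s δ v a W L X K η G G' m c
        linarith
      · push_neg at hcase
        have hb : v t ^ 2 / (2 * (1 - e)) ≤ L / 2 := by
          rw [div_le_iff₀ (by linarith)]
          clear_value e s δ v a W L X K η G G' m c
          nlinarith
        have hx4L : 2 * L ≤ x t ^ 4 := by linarith
        have hx2L : Real.sqrt (2 * L) ≤ x t ^ 2 := by
          have h5 := Real.sqrt_le_sqrt hx4L
          rwa [show x t ^ 4 = (x t ^ 2) ^ 2 by ring, Real.sqrt_sq (sq_nonneg _)] at h5
        have hx6 : 2 * L * Real.sqrt (2 * L) ≤ x t ^ 6 := by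
          calc 2 * L * Real.sqrt (2 * L) ≤ 2 * L * x t ^ 2 :=
                mul_le_mul_of_nonneg_left hx2L (by linarith)
            _ ≤ x t ^ 4 * x t ^ 2 := mul_le_mul_of_nonneg_right hx4L (sq_nonneg _)
            _ = x t ^ 6 := by ring
        have h1 : m ≤ x t ^ 6 := le_trans (min_le_right _ _) hx6
        have h3 : c * m ≤ η * (1 - e) / 2 * x t ^ 6 :=
          mul_le_mul (min_le_right _ _) h1 hm0.le
            (le_of_lt (div_pos (mul_pos hη0 h1me) two_pos))
        clear_value e s δ v a W L X K η G G' m c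
        linarith
    set H : ℝ → ℝ := fun t => G t + c * m * t with hH_def
    have hdH : ∀ t, HasDerivAt H (G' t + c * m) t := by
      intro t
      have h1 : HasDerivAt (fun t : ℝ => c * m * t) (c * m) t := by
        simpa using (hasDerivAt_id t).const_mul (c * m)
      exact (hdG t).add h1
    have hHanti : AntitoneOn H (Set.Ici (0:ℝ)) := by
      apply antitoneOn_of_deriv_nonpos (convex_Ici 0)
      · exact fun t _ => (hdH t).differentiableAt.continuousAt.continuousWithinAt
      · exact fun t _ => (hdH t).differentiableAt.differentiableWithinAt
      · intro t ht
        rw [interior_Ici] at ht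
        rw [(hdH t).deriv]
        linarith [hGm t (le_of_lt ht)]
    have hG00 : 0 ≤ G 0 := by
      have h1 := hGlow 0 le_rfl
      have h2 := hW0 0
      clear_value W G
      linarith
    set T := (G 0 + 1) / (c * m) with hT_def
    have hT0 : 0 ≤ T := div_nonneg (by linarith) (mul_nonneg hc0.le hm0.le)
    have hHT := hHanti (Set.mem_Ici.2 le_rfl) (Set.mem_Ici.2 hT0) hT0
    have hcm : c * m * T = G 0 + 1 := by
      simp only [hT_def]
      field_simp
    simp only [hH_def] at hHT
    clear_value e s δ v a W L X K η G G' m c H T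
    have hGT : G T ≤ -1 := by linarith
    linarith [hGlow T hT0, hW0 T]
  rw [hLzero] at hlim
  -- conclude
  constructor
  · have hx4 : Tendsto (fun t => x t ^ 4) atTop (nhds 0) := by
      apply squeeze_zero (fun t => by positivity) hx4W
      simpa using hlim.const_mul 4
    have hcont : ContinuousAt (fun y : ℝ => y ^ ((1:ℝ)/4)) 0 :=
      Real.continuousAt_rpow_const 0 (1/4) (Or.inr (by norm_num))
    have h1 : Tendsto (fun t => (x t ^ 4) ^ ((1:ℝ)/4)) atTop (nhds 0) := by
      have := hcont.tendsto.comp hx4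
      simpa [Real.zero_rpow, Function.comp_def] using this
    rw [tendsto_zero_iff_norm_tendsto_zero]
    have heq : (fun t => ‖x t‖) = fun t => (x t ^ 4) ^ ((1:ℝ)/4) := by
      funext t
      rw [Real.norm_eq_abs,
        show x t ^ 4 = |x t| ^ 4 by rw [← abs_pow]; exact (abs_of_nonneg (by positivity)).symm,
        ← Real.rpow_natCast |x t| 4, ← Real.rpow_mul (abs_nonneg _)]
      norm_num
    rw [heq]
    exact h1
  · have hv2 : Tendsto (fun t => v t ^ 2) atTop (nhds 0) := by
      apply squeeze_zero (fun t => sq_nonneg _) hv2W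
      simpa using hlim.const_mul (2 * (1 + e))
    have h1 : Tendsto (fun t => Real.sqrt (v t ^ 2)) atTop (nhds 0) := by
      have := Real.continuous_sqrt.continuousAt.tendsto.comp hv2
      simpa [Function.comp_def] using this
    rw [tendsto_zero_iff_norm_tendsto_zero]
    have heq : (fun t => ‖v t‖) = fun t => Real.sqrt (v t ^ 2) := by
      funext t
      rw [Real.norm_eq_abs, Real.sqrt_sq_eq_abs]
    rw [heq]
    exact h1
end

section
/- Let κ, M, M₀, ρ > 0 and ω ∈ ℝ satisfy Kepler's third law ω²·ρ³ = κ·(M + M₀), set ρ_C = M₀·ρ/(M + M₀) (the distance of the centre of the satellite from the centre of mass), and let c ∈ [−1, 1]. Define, for r near 0, the total (gravitational plus centrifugal) potential V(r) = −κ·M₀·(ρ² + r² − 2ρ·r·c)^{−1/2} − (ω²/2)·(ρ_C² + r² − 2ρ_C·r·c). Then V'(0) = 0 (the terms linear in r cancel by Kepler's third law), and V''(0) = −(κ/ρ³)·(3·M₀·c² + M); that is, V(r) = V(0) − (κM/ρ)·(r/ρ)²·((3/2)·(M₀/M)·c² + 1/2) + o(r²). -/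
open Asymptotics Filter

/-- In the rotating frame, with Kepler's third law `ω²ρ³ = κ(M + M₀)` and
`ρ_C = M₀ρ/(M + M₀)`, the gravitational-plus-centrifugal potential
`V(r) = −κM₀(ρ² + r² − 2ρrc)^{−1/2} − (ω²/2)(ρ_C² + r² − 2ρ_C r c)`
has `V'(0) = 0`, `V''(0) = −(κ/ρ³)(3M₀c² + M)`, i.e.
`V(r) = V(0) − (κM/ρ)(r/ρ)²((3/2)(M₀/M)c² + 1/2) + o(r²)`. -/
theorem tidal_potential_expansion
    (κ M M₀ ρ : ℝ) (hκ : 0 < κ) (hM : 0 < M) (hM₀ : 0 < M₀) (hρ : 0 < ρ)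
    (ω : ℝ) (hKepler : ω ^ 2 * ρ ^ 3 = κ * (M + M₀))
    (ρC : ℝ) (hρC : ρC = M₀ * ρ / (M + M₀))
    (c : ℝ) (hc : c ∈ Set.Icc (-1 : ℝ) 1)
    (V : ℝ → ℝ)
    (hV : ∀ r : ℝ,
      V r = -(κ * M₀) / Real.sqrt (ρ ^ 2 + r ^ 2 - 2 * ρ * r * c)
        - (ω ^ 2 / 2) * (ρC ^ 2 + r ^ 2 - 2 * ρC * r * c)) :
    deriv V 0 = 0 ∧
      deriv (deriv V) 0 = -(κ / ρ ^ 3) * (3 * M₀ * c ^ 2 + M) ∧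
      (fun r : ℝ =>
          V r - (V 0 - (κ * M / ρ) * (r / ρ) ^ 2 *
            ((3 / 2) * (M₀ / M) * c ^ 2 + 1 / 2)))
        =o[nhds 0] fun r : ℝ => r ^ 2 := by
  have hMM₀ : (0:ℝ) < M + M₀ := by positivity
  have hω2 : ω ^ 2 = κ * (M + M₀) / ρ ^ 3 := by
    field_simp
    linarith [hKepler]
  have hc1 : |c| ≤ 1 := abs_le.mpr ⟨hc.1, hc.2⟩
  have hc2 : c ^ 2 ≤ 1 := by nlinarith [abs_nonneg c, sq_abs c]
  set f : ℝ → ℝ := fun r => ρ ^ 2 + r ^ 2 - 2 * ρ * r * c with hfdef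
  have hfpos : ∀ r : ℝ, |r| < ρ → 0 < f r := by
    intro r hr
    have h1 : f r = (ρ - r * c) ^ 2 + r ^ 2 * (1 - c ^ 2) := by
      simp only [hfdef]; ring
    have hrc : r * c ≤ |r * c| := le_abs_self _
    have hrc2 : |r * c| < ρ := by
      calc |r * c| = |r| * |c| := abs_mul _ _
        _ ≤ |r| * 1 := by gcongr
        _ < ρ := by simpa using hr
    have h2 : 0 < ρ - r * c := by linarith
    nlinarith [sq_nonneg r]
  -- explicit first derivative
  set D : ℝ → ℝ := fun r =>
    κ * M₀ * (r - ρ * c) / (f r * Real.sqrt (f r)) - ω ^ 2 * (r - ρC * c) with hDdef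
  have hD : ∀ r : ℝ, |r| < ρ → HasDerivAt V (D r) r := by
    intro r hr
    have hfr := hfpos r hr
    have hsr : 0 < Real.sqrt (f r) := Real.sqrt_pos.mpr hfr
    have hf' : HasDerivAt f (2 * r - 2 * ρ * c) r := by
      have h1 : HasDerivAt (fun x : ℝ => ρ ^ 2 + x ^ 2 - 2 * ρ * x * c)
          (2 * r - 2 * ρ * c) r := by
        have hp : HasDerivAt (fun x : ℝ => x ^ 2) ((2:ℕ) * r ^ 1) r := hasDerivAt_pow 2 r
        have hq : HasDerivAt (fun x : ℝ => 2 * ρ * x * c) (2 * ρ * 1 * c) r :=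
          (((hasDerivAt_id r).const_mul (2 * ρ)).mul_const c)
        refine ((hp.const_add (ρ ^ 2)).sub hq).congr_deriv ?_
        push_cast; ring
      exact h1
    have hsq : HasDerivAt (fun x => Real.sqrt (f x))
        ((2 * r - 2 * ρ * c) / (2 * Real.sqrt (f r))) r := hf'.sqrt hfr.ne'
    have hinv : HasDerivAt (fun x => (Real.sqrt (f x))⁻¹)
        (-((2 * r - 2 * ρ * c) / (2 * Real.sqrt (f r))) / (Real.sqrt (f r)) ^ 2) r :=
      hsq.inv hsr.ne'
    have hpoly : HasDerivAt (fun x : ℝ => (ω ^ 2 / 2) * (ρC ^ 2 + x ^ 2 - 2 * ρC * x * c))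
        (ω ^ 2 * (r - ρC * c)) r := by
      have hp : HasDerivAt (fun x : ℝ => x ^ 2) ((2:ℕ) * r ^ 1) r := hasDerivAt_pow 2 r
      have hq : HasDerivAt (fun x : ℝ => 2 * ρC * x * c) (2 * ρC * 1 * c) r :=
        (((hasDerivAt_id r).const_mul (2 * ρC)).mul_const c)
      refine ((((hp.const_add (ρC ^ 2)).sub hq).const_mul (ω ^ 2 / 2))).congr_deriv ?_
      push_cast; ring
    have hVfun : V = fun x => -(κ * M₀) * (Real.sqrt (f x))⁻¹
        - (ω ^ 2 / 2) * (ρC ^ 2 + x ^ 2 - 2 * ρC * x * c) := by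
      funext x
      rw [hV x]
      rw [div_eq_mul_inv]
    rw [hVfun]
    have hsq2 : (Real.sqrt (f r)) ^ 2 = f r := Real.sq_sqrt hfr.le
    refine ((hinv.const_mul (-(κ * M₀))).sub hpoly).congr_deriv ?_
    rw [hDdef]
    field_simp
    linear_combination (-(κ * M₀ * (r - ρ * c))) * hsq2
  have hf0 : f 0 = ρ ^ 2 := by simp [hfdef]
  have hs0 : Real.sqrt (f 0) = ρ := by rw [hf0, Real.sqrt_sq hρ.le]
  have hD0 : D 0 = 0 := by
    rw [hDdef]
    simp only [hf0, hs0, Real.sqrt_sq hρ.le]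
    rw [hω2, hρC]
    field_simp
    ring
  set A : ℝ := -(κ / ρ ^ 3) * (3 * M₀ * c ^ 2 + M) with hAdef
  -- second derivative of V, i.e. derivative of D at 0
  have hA : HasDerivAt D A 0 := by
    have hf0' : (0:ℝ) < f 0 := hfpos 0 (by simpa using hρ)
    have hs0' : 0 < Real.sqrt (f 0) := Real.sqrt_pos.mpr hf0'
    have hf' : HasDerivAt f (2 * 0 - 2 * ρ * c) 0 := by
      have hp : HasDerivAt (fun x : ℝ => x ^ 2) ((2:ℕ) * (0:ℝ) ^ 1) 0 := hasDerivAt_pow 2 0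
      have hq : HasDerivAt (fun x : ℝ => 2 * ρ * x * c) (2 * ρ * 1 * c) 0 :=
        (((hasDerivAt_id 0).const_mul (2 * ρ)).mul_const c)
      refine ((hp.const_add (ρ ^ 2)).sub hq).congr_deriv ?_
      push_cast; ring
    have hsq : HasDerivAt (fun x => Real.sqrt (f x))
        ((2 * 0 - 2 * ρ * c) / (2 * Real.sqrt (f 0))) 0 := hf'.sqrt hf0'.ne'
    have hw : HasDerivAt (fun x => f x * Real.sqrt (f x))
        ((2 * 0 - 2 * ρ * c) * Real.sqrt (f 0)
          + f 0 * ((2 * 0 - 2 * ρ * c) / (2 * Real.sqrt (f 0)))) 0 := hf'.mul hsq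
    have hnum : HasDerivAt (fun x : ℝ => κ * M₀ * (x - ρ * c)) (κ * M₀) 0 := by
      have := ((hasDerivAt_id (0:ℝ)).sub_const (ρ * c)).const_mul (κ * M₀)
      simpa using this
    have hwne : f 0 * Real.sqrt (f 0) ≠ 0 := by positivity
    have hdiv := hnum.div hw hwne
    have hlin : HasDerivAt (fun x : ℝ => ω ^ 2 * (x - ρC * c)) (ω ^ 2) 0 := by
      have := ((hasDerivAt_id (0:ℝ)).sub_const (ρC * c)).const_mul (ω ^ 2)
      simpa using this
    have hDq : HasDerivAt D
        ((κ * M₀ * (f 0 * Real.sqrt (f 0)) - κ * M₀ * (0 - ρ * c) *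
            ((2 * 0 - 2 * ρ * c) * Real.sqrt (f 0)
              + f 0 * ((2 * 0 - 2 * ρ * c) / (2 * Real.sqrt (f 0)))))
          / (f 0 * Real.sqrt (f 0)) ^ 2 - ω ^ 2) 0 := hdiv.sub hlin
    refine (hDq).congr_deriv ?_
    rw [hAdef]
    simp only [hf0, hs0, Real.sqrt_sq hρ.le]
    rw [hω2]
    field_simp
    ring
  -- the three conclusions
  have hballmem : Metric.ball (0:ℝ) ρ ∈ nhds (0:ℝ) := Metric.ball_mem_nhds 0 hρ
  have hDeq : deriv V =ᶠ[nhds 0] D := by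
    filter_upwards [hballmem] with r hr
    exact (hD r (by simpa [Real.dist_eq] using hr)).deriv
  have hderiv0 : deriv V 0 = 0 := by
    rw [(hD 0 (by simpa using hρ)).deriv, hD0]
  refine ⟨hderiv0, ?_, ?_⟩
  · rw [hDeq.deriv_eq, hA.deriv]
  · -- little-o part
    set g : ℝ → ℝ := fun r => V r - V 0 - (A / 2) * r ^ 2 with hgdef
    have hfun : (fun r : ℝ =>
        V r - (V 0 - (κ * M / ρ) * (r / ρ) ^ 2 *
          ((3 / 2) * (M₀ / M) * c ^ 2 + 1 / 2))) = g := by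
      funext r
      rw [hgdef]
      simp only [hAdef]
      field_simp
      ring
    rw [hfun]
    set h : ℝ → ℝ := fun r => D r - A * r with hhdef
    have hg' : ∀ r : ℝ, |r| < ρ → HasDerivAt g (h r) r := by
      intro r hr
      have hp : HasDerivAt (fun x : ℝ => x ^ 2) ((2:ℕ) * r ^ 1) r := hasDerivAt_pow 2 r
      have := ((hD r hr).sub_const (V 0)).sub (hp.const_mul (A / 2))
      refine (this).congr_deriv ?_
      rw [hhdef]; push_cast; ring
    have hh0 : h 0 = 0 := by rw [hhdef]; simp [hD0]
    have hh' : HasDerivAt h 0 0 := by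
      have := hA.sub ((hasDerivAt_id (0:ℝ)).const_mul A)
      refine (this).congr_deriv ?_
      simp
    have ho : h =o[nhds 0] (fun r : ℝ => r) := by
      have := hasDerivAt_iff_isLittleO.mp hh'
      simpa [hh0] using this
    rw [isLittleO_iff]
    intro ε hε
    have hev : ∀ᶠ t : ℝ in nhds 0, ‖h t‖ ≤ ε * ‖t‖ ∧ |t| < ρ := by
      have h1 := isLittleO_iff.mp ho hε
      have h2 : ∀ᶠ t : ℝ in nhds 0, |t| < ρ := by
        filter_upwards [hballmem] with t ht
        simpa [Real.dist_eq] using ht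
      exact h1.and h2
    rcases Metric.eventually_nhds_iff.mp hev with ⟨δ, hδ, hδ'⟩
    filter_upwards [Metric.ball_mem_nhds (0:ℝ) hδ] with r hr
    have hrδ : |r| < δ := by simpa [Real.dist_eq] using hr
    -- MVT on the closed ball of radius |r|
    have hmvt : ‖g r - g 0‖ ≤ ε * |r| * ‖r - 0‖ := by
      apply (convex_closedBall (0:ℝ) |r|).norm_image_sub_le_of_norm_hasDerivWithin_le
        (f' := h)
      · intro t ht
        have htr : |t| ≤ |r| := by
          simpa [Real.dist_eq] using Metric.mem_closedBall.mp ht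
        have hrρ : |r| < ρ := (hδ' (by simpa [Real.dist_eq] using hrδ)).2
        have htρ : |t| < ρ := lt_of_le_of_lt htr hrρ
        exact (hg' t htρ).hasDerivWithinAt
      · intro t ht
        have htr : |t| ≤ |r| := by
          simpa [Real.dist_eq] using Metric.mem_closedBall.mp ht
        have htδ : dist t (0:ℝ) < δ := by
          simp only [Real.dist_eq, sub_zero]
          exact lt_of_le_of_lt htr hrδ
        calc ‖h t‖ ≤ ε * ‖t‖ := (hδ' htδ).1
          _ ≤ ε * |r| := by
              have : ‖t‖ = |t| := rfl
              rw [this]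
              exact mul_le_mul_of_nonneg_left htr hε.le
      · exact Metric.mem_closedBall.mpr (by simp [Real.dist_eq])
      · exact Metric.mem_closedBall.mpr (by simp [Real.dist_eq])
    have hg0 : g 0 = 0 := by rw [hgdef]; simp
    rw [hg0, sub_zero, sub_zero] at hmvt
    calc ‖g r‖ ≤ ε * |r| * ‖r‖ := hmvt
      _ = ε * ‖r ^ 2‖ := by
          rw [Real.norm_eq_abs, Real.norm_eq_abs, abs_pow]
          ring
end
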